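/- Let (Z_ℓ)_{ℓ≥1} be independent Poisson random variables with E[Z_ℓ] = 1/ℓ. There exist absolute constants c, C > 0 such that for every real M ≥ 1, P( sup_{t ∈ [0,1)} Σ_{1 ≤ ℓ ≤ M} Z_ℓ·log|1 − e(ℓt)| ≤ 3·log M ) ≥ 1 − C·M^{−c}. -/

import Mathlib

open MeasureTheory ProbabilityTheory Finset

/-- `e(t) = exp(2πit)`. -/
noncomputable def ec (t : ℝ) : ℂ := Complex.exp (2 * Real.pi * Complex.I * t)

/-- Extended-real logarithm with `log 0 = -∞`. -/
noncomputable def elog (x : ℝ) : EReal := if x = 0 then ⊥ else ((Real.log x : ℝ) : EReal)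

/-- The Poisson field `Y_J(t) = Σ_{ℓ ∈ J} Z_ℓ log|1 - e(ℓt)| ∈ [-∞,∞)`. -/
noncomputable def Yfield (J : Finset ℕ) (Zω : ℕ → ℕ) (t : ℝ) : EReal :=
  ∑ ℓ ∈ J, ((Zω ℓ : ℝ) : EReal) * elog ‖1 - ec ((ℓ : ℝ) * t)‖

lemma pois_hasSum (r : NNReal) :
    HasSum (fun n : ℕ ↦ poissonPMFReal r n * (2:ℝ)^n) (Real.exp r) := by
  have h : HasSum (fun n : ℕ ↦ (2 * (r:ℝ))^n / n.factorial) (Real.exp (2*r)) := by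
    rw [Real.exp_eq_exp_ℝ]
    exact NormedSpace.expSeries_div_hasSum_exp (2*(r:ℝ))
  have h2 := h.mul_left (Real.exp (-(r:ℝ)))
  rw [← Real.exp_add] at h2
  convert h2 using 2 with n
  · rfl
  · unfold poissonPMFReal
    rw [mul_pow]
    ring
  · ring_nf

lemma pois_integrable (r : NNReal) :
    Integrable (fun n : ℕ ↦ Real.exp (Real.log 2 * n)) (poissonPMF r).toMeasure := by
  have hf : ∀ n : ℕ, Real.exp (Real.log 2 * (n:ℝ)) = (2:ℝ)^n := by
    intro n
    rw [mul_comm, Real.exp_nat_mul, Real.exp_log two_pos]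
  constructor
  · exact (measurable_from_top (f := fun n : ℕ ↦ Real.exp (Real.log 2 * (n:ℝ)))).aestronglyMeasurable
  · rw [hasFiniteIntegral_iff_norm]
    calc ∫⁻ n : ℕ, ENNReal.ofReal ‖Real.exp (Real.log 2 * n)‖ ∂(poissonPMF r).toMeasure
        = ∑' n : ℕ, ENNReal.ofReal ‖Real.exp (Real.log 2 * n)‖ * (poissonPMF r).toMeasure {n} :=
          lintegral_countable' _
      _ = ∑' n : ℕ, ENNReal.ofReal (poissonPMFReal r n * 2^n) := by
          congr 1 with n
          rw [PMF.toMeasure_apply_singleton _ _ (measurableSet_singleton n)]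
          rw [Real.norm_eq_abs, abs_of_pos (Real.exp_pos _), hf n]
          have hp : poissonPMF r n = ENNReal.ofReal (poissonPMFReal r n) := rfl
          rw [hp, ← ENNReal.ofReal_mul (by positivity)]
          ring_nf
      _ = ENNReal.ofReal (Real.exp r) := by
          rw [← (pois_hasSum r).tsum_eq, ENNReal.ofReal_tsum_of_nonneg]
          · exact fun n => mul_nonneg poissonPMFReal_nonneg (by positivity)
          · exact (pois_hasSum r).summable
      _ < ⊤ := ENNReal.ofReal_lt_top

lemma pois_integral (r : NNReal) :
    ∫ n : ℕ, Real.exp (Real.log 2 * n) ∂(poissonPMF r).toMeasure = Real.exp r := by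
  rw [PMF.integral_eq_tsum _ _ (pois_integrable r)]
  rw [← (pois_hasSum r).tsum_eq]
  congr 1 with n
  rw [smul_eq_mul]
  have hp : poissonPMF r n = ENNReal.ofReal (poissonPMFReal r n) := rfl
  rw [hp, ENNReal.toReal_ofReal poissonPMFReal_nonneg]
  rw [mul_comm (Real.log 2), Real.exp_nat_mul, Real.exp_log two_pos, mul_comm]

lemma abs_one_sub_ec_le (u : ℝ) : ‖1 - ec u‖ ≤ 2 := by
  have h : ‖ec u‖ = 1 := by simp [ec, Complex.norm_exp]
  calc ‖1 - ec u‖ ≤ ‖(1:ℂ)‖ + ‖ec u‖ := norm_sub_le 1 (ec u)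
    _ ≤ 2 := by rw [h]; norm_num

lemma term_le (a : ℕ) (x : ℝ) (hx0 : 0 ≤ x) (hx2 : x ≤ 2) :
    ((a : ℝ) : EReal) * elog x ≤ (((a : ℝ) * Real.log 2 : ℝ) : EReal) := by
  rcases eq_or_ne x 0 with h0 | h0
  · rw [elog, if_pos h0]
    rcases Nat.eq_zero_or_pos a with ha | ha
    · subst ha
      simp
    · rw [EReal.coe_mul_bot_of_pos (by exact_mod_cast ha)]
      exact bot_le
  · rw [elog, if_neg h0, ← EReal.coe_mul, EReal.coe_le_coe_iff]
    have hxpos : 0 < x := lt_of_le_of_ne hx0 (Ne.symm h0)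
    exact mul_le_mul_of_nonneg_left (Real.log_le_log hxpos hx2) (Nat.cast_nonneg a)

lemma EReal_coe_sum (s : Finset ℕ) (f : ℕ → ℝ) :
    ((∑ i ∈ s, f i : ℝ) : EReal) = ∑ i ∈ s, ((f i : ℝ) : EReal) := by
  induction s using Finset.cons_induction with
  | empty => simp
  | cons a s ha ih => rw [Finset.sum_cons, Finset.sum_cons, EReal.coe_add, ih]

lemma Yfield_le (m : ℕ) (Zω : ℕ → ℕ) (t : ℝ) :
    Yfield (Finset.Icc 1 m) Zω t ≤
      (((∑ ℓ ∈ Finset.Icc 1 m, (Zω ℓ : ℝ)) * Real.log 2 : ℝ) : EReal) := by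
  rw [Finset.sum_mul]
  rw [EReal_coe_sum]
  refine Finset.sum_le_sum fun ℓ _ => ?_
  exact term_le (Zω ℓ) _ (norm_nonneg _) (abs_one_sub_ec_le _)

/-- crude uniform upper bound for the Poisson field,
`sup_{t ∈ [0,1)} Σ_{1 ≤ ℓ ≤ M} Z_ℓ log|1 - e(ℓt)| ≤ 3 log M`
with probability at least `1 - C M^{-c}`. -/
theorem poisson_field_crude_upper_bound :
    ∃ c C : ℝ, 0 < c ∧ 0 < C ∧
      ∀ (Ω : Type) (_ : MeasurableSpace Ω) (μ : Measure Ω), IsProbabilityMeasure μ →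
      ∀ (Z : ℕ → Ω → ℕ),
        (∀ ℓ, Measurable (Z ℓ)) →
        iIndepFun Z μ →
        (∀ ℓ : ℕ, 1 ≤ ℓ → Measure.map (Z ℓ) μ = ((poissonPMF ((ℓ : NNReal)⁻¹)).toMeasure)) →
      ∀ M : ℝ, 1 ≤ M →
        ENNReal.ofReal (1 - C * M ^ (-c)) ≤
          μ {ω | (⨆ t : Set.Ico (0:ℝ) 1,
                    Yfield (Finset.Icc 1 ⌊M⌋₊) (fun ℓ => Z ℓ ω) (t : ℝ))
                  ≤ ((3 * Real.log M : ℝ) : EReal)} := by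
  refine ⟨2, Real.exp 1, two_pos, Real.exp_pos 1, ?_⟩
  intro Ω mΩ μ hμ Z hZmeas hZindep hZmap M hM
  have hM0 : (0:ℝ) < M := lt_of_lt_of_le one_pos hM
  set m := ⌊M⌋₊ with hm
  set W : ℕ → Ω → ℝ := fun ℓ ω => (Z ℓ ω : ℝ) with hWdef
  have hWmeas : ∀ ℓ, Measurable (W ℓ) := fun ℓ => measurable_from_top.comp (hZmeas ℓ)
  have hWindep : iIndepFun W μ :=
    hZindep.comp (fun _ n => (n:ℝ)) (fun _ => measurable_from_top)
  set X : Ω → ℝ := ∑ ℓ ∈ Finset.Icc 1 m, W ℓ with hXdef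
  have hXmeas : Measurable X := by
    rw [hXdef]
    rw [show (∑ ℓ ∈ Finset.Icc 1 m, W ℓ) = fun a => ∑ ℓ ∈ Finset.Icc 1 m, W ℓ a from
      funext fun a => Finset.sum_apply a _ _]
    exact Finset.measurable_sum _ fun ℓ _ => hWmeas ℓ
  have hint : ∀ ℓ ∈ Finset.Icc 1 m, Integrable (fun ω => Real.exp (Real.log 2 * W ℓ ω)) μ := by
    intro ℓ hℓ
    have h1 : (1:ℕ) ≤ ℓ := (Finset.mem_Icc.mp hℓ).1
    have hi := pois_integrable ((ℓ:NNReal)⁻¹)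
    rw [← hZmap ℓ h1] at hi
    exact (integrable_map_measure (f := Z ℓ) (g := fun n : ℕ => Real.exp (Real.log 2 * n))
      measurable_from_top.aestronglyMeasurable (hZmeas ℓ).aemeasurable).mp hi
  have hXint : Integrable (fun ω => Real.exp (Real.log 2 * X ω)) μ :=
    hWindep.integrable_exp_mul_sum hWmeas hint
  have hmgf_each : ∀ ℓ ∈ Finset.Icc 1 m, mgf (W ℓ) μ (Real.log 2) = Real.exp ((ℓ:ℝ)⁻¹) := by
    intro ℓ hℓ
    have h1 : (1:ℕ) ≤ ℓ := (Finset.mem_Icc.mp hℓ).1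
    have heq : mgf (W ℓ) μ (Real.log 2)
        = ∫ n : ℕ, Real.exp (Real.log 2 * n) ∂(Measure.map (Z ℓ) μ) := by
      rw [mgf, integral_map (hZmeas ℓ).aemeasurable measurable_from_top.aestronglyMeasurable]
    rw [heq, hZmap ℓ h1, pois_integral]
    norm_num
  have hmgf : mgf X μ (Real.log 2) ≤ Real.exp 1 * M := by
    rw [hXdef, hWindep.mgf_sum hWmeas]
    calc ∏ ℓ ∈ Finset.Icc 1 m, mgf (W ℓ) μ (Real.log 2)
        = ∏ ℓ ∈ Finset.Icc 1 m, Real.exp ((ℓ:ℝ)⁻¹) := Finset.prod_congr rfl hmgf_each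
      _ = Real.exp (∑ ℓ ∈ Finset.Icc 1 m, (ℓ:ℝ)⁻¹) := by rw [Real.exp_sum]
      _ ≤ Real.exp (1 + Real.log M) := by
          apply Real.exp_le_exp.mpr
          calc ∑ ℓ ∈ Finset.Icc 1 m, (ℓ:ℝ)⁻¹ = ((harmonic m : ℚ) : ℝ) := by
                rw [harmonic_eq_sum_Icc]; push_cast; rfl
            _ ≤ 1 + Real.log M := harmonic_floor_le_one_add_log M hM
      _ = Real.exp 1 * M := by rw [Real.exp_add, Real.exp_log hM0]
  set ε : ℝ := 3 * Real.log M / Real.log 2 with hε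
  have h2 : (0:ℝ) < Real.log 2 := Real.log_pos one_lt_two
  have hcher := measure_ge_le_exp_mul_mgf (X := X) (μ := μ) (t := Real.log 2) ε h2.le hXint
  have hexp : Real.exp (-Real.log 2 * ε) = M ^ (-(3:ℝ)) := by
    have hh : -Real.log 2 * ε = Real.log M * (-3) := by
      rw [hε]; field_simp
    rw [hh, Real.exp_mul, Real.exp_log hM0]
  have hbound : (μ {ω | ε ≤ X ω}).toReal ≤ Real.exp 1 * M ^ (-(2:ℝ)) := by
    calc (μ {ω | ε ≤ X ω}).toReal
        ≤ Real.exp (-Real.log 2 * ε) * mgf X μ (Real.log 2) := hcher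
      _ ≤ M ^ (-(3:ℝ)) * (Real.exp 1 * M) := by
          rw [hexp]
          exact mul_le_mul_of_nonneg_left hmgf (Real.rpow_nonneg hM0.le _)
      _ = Real.exp 1 * M ^ (-(2:ℝ)) := by
          have h3 : M ^ (-(3:ℝ)) * M = M ^ (-(2:ℝ)) := by
            nth_rewrite 2 [← Real.rpow_one M]
            rw [← Real.rpow_add hM0]
            norm_num
          rw [← h3]; ring
  set s : Set Ω := {ω | ε ≤ X ω} with hsdef
  have hs : MeasurableSet s := measurableSet_le measurable_const hXmeas
  have hμs : μ s ≤ ENNReal.ofReal (Real.exp 1 * M ^ (-(2:ℝ))) := by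
    rw [← ENNReal.ofReal_toReal (measure_ne_top μ s)]
    exact ENNReal.ofReal_le_ofReal hbound
  have hcompl : ENNReal.ofReal (1 - Real.exp 1 * M ^ (-(2:ℝ))) ≤ μ sᶜ := by
    rw [measure_compl hs (measure_ne_top μ s), measure_univ]
    rw [ENNReal.ofReal_sub _ (by positivity), ENNReal.ofReal_one]
    exact tsub_le_tsub_left hμs 1
  have hM2 : M ^ (-(2:ℝ)) = M ^ (-(2:ℝ)) := rfl
  refine le_trans (by norm_num : ENNReal.ofReal (1 - Real.exp 1 * M ^ (-(2:ℝ)))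
      = ENNReal.ofReal (1 - Real.exp 1 * M ^ (-(2:ℝ)))).ge (le_trans hcompl (measure_mono ?_))
  intro ω hω
  simp only [hsdef, Set.mem_compl_iff, Set.mem_setOf_eq, not_le] at hω
  show (⨆ t : Set.Ico (0:ℝ) 1, Yfield (Finset.Icc 1 m) (fun ℓ => Z ℓ ω) t)
      ≤ ((3 * Real.log M : ℝ) : EReal)
  refine iSup_le fun t => ?_
  refine le_trans (Yfield_le m _ t) ?_
  rw [EReal.coe_le_coe_iff]
  have hXω : X ω = ∑ ℓ ∈ Finset.Icc 1 m, ((Z ℓ ω : ℝ)) := by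
    rw [hXdef, Finset.sum_apply]
  calc (∑ ℓ ∈ Finset.Icc 1 m, ((Z ℓ ω : ℝ))) * Real.log 2
      = X ω * Real.log 2 := by rw [hXω]
    _ ≤ ε * Real.log 2 := mul_le_mul_of_nonneg_right hω.le h2.le
    _ = 3 * Real.log M := div_mul_cancel₀ _ (ne_of_gt h2)
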